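/- Let β > 0 and for each r > 0 let y(r) > 0 be the unique solution of r·y·(1+2y²)^((β-1)/2) = 1. Then (r^(1/β)·y(r) − 2^((1−β)/(2β))) / r^(2/β) → −((β−1)/β)·2^(−(3β+1)/(2β)) as r → 0⁺. -/

import Mathlib

open Filter Real Set Topology

lemma aux_pow_eq (β : ℝ) (hβ : 0 < β) {r Y : ℝ} (hr : 0 < r) (hY : 0 < Y)
    (heq : r * Y * (1 + 2 * Y ^ 2) ^ ((β - 1) / 2) = 1) :
    r ^ (1 / β) * Y =
      2 ^ ((1 - β) / (2 * β)) * (1 + (2 * Y ^ 2)⁻¹) ^ ((1 - β) / (2 * β)) := by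
  have hβ' : β ≠ 0 := hβ.ne'
  have h2Y : (0:ℝ) < 2 * Y ^ 2 := by positivity
  have hE : (0:ℝ) < 1 + (2 * Y ^ 2)⁻¹ := by positivity
  set p : ℝ := (β - 1) / 2 with hp
  have hsplit : (1 + 2 * Y ^ 2 : ℝ) = 2 * Y ^ 2 * (1 + (2 * Y ^ 2)⁻¹) := by
    field_simp
    ring
  have hY2 : ((Y:ℝ) ^ 2) ^ p = Y ^ (2 * p) := by
    rw [← Real.rpow_natCast Y 2, ← Real.rpow_mul hY.le]
    norm_num
  have h2p : 2 * p = β - 1 := by rw [hp]; ring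
  have h1 : (1 + 2 * Y ^ 2 : ℝ) ^ p = 2 ^ p * Y ^ (β - 1) * (1 + (2 * Y ^ 2)⁻¹) ^ p := by
    rw [hsplit, Real.mul_rpow h2Y.le hE.le, Real.mul_rpow (by norm_num) (by positivity),
      hY2, h2p]
  have hYsplit : Y * Y ^ (β - 1) = Y ^ β := by
    nth_rewrite 1 [← Real.rpow_one Y]
    rw [← Real.rpow_add hY]
    ring_nf
  have hYβ : r * Y ^ β * (2:ℝ) ^ p * (1 + (2 * Y ^ 2)⁻¹) ^ p = 1 := by
    calc r * Y ^ β * (2:ℝ) ^ p * (1 + (2 * Y ^ 2)⁻¹) ^ p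
        = r * Y * (1 + 2 * Y ^ 2) ^ p := by rw [h1, ← hYsplit]; ring
      _ = 1 := heq
  have h2pp : (0:ℝ) < (2:ℝ) ^ p := Real.rpow_pos_of_pos two_pos p
  have hEp : (0:ℝ) < (1 + (2 * Y ^ 2)⁻¹) ^ p := Real.rpow_pos_of_pos hE p
  have hYb : Y ^ β = (r * (2:ℝ) ^ p * (1 + (2 * Y ^ 2)⁻¹) ^ p)⁻¹ := by
    refine eq_inv_of_mul_eq_one_left ?_
    calc Y ^ β * (r * (2:ℝ) ^ p * (1 + (2 * Y ^ 2)⁻¹) ^ p)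
        = r * Y ^ β * (2:ℝ) ^ p * (1 + (2 * Y ^ 2)⁻¹) ^ p := by ring
      _ = 1 := hYβ
  have hYeq : Y = ((r * (2:ℝ) ^ p * (1 + (2 * Y ^ 2)⁻¹) ^ p)⁻¹) ^ (1 / β) := by
    rw [← hYb, ← Real.rpow_mul hY.le, mul_one_div, div_self hβ', Real.rpow_one]
  have hprodpos : (0:ℝ) < r * (2:ℝ) ^ p * (1 + (2 * Y ^ 2)⁻¹) ^ p := by positivity
  have hexp : (1 - β) / (2 * β) = -(p * (1 / β)) := by
    rw [hp]; field_simp; ring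
  have hrp : (0:ℝ) < r ^ (1 / β) := Real.rpow_pos_of_pos hr _
  have h2q : (0:ℝ) < (2:ℝ) ^ (p * (1 / β)) := Real.rpow_pos_of_pos two_pos _
  have hEq : (0:ℝ) < (1 + (2 * Y ^ 2)⁻¹) ^ (p * (1 / β)) := Real.rpow_pos_of_pos hE _
  have main : r ^ (1 / β) * Y =
      ((2:ℝ) ^ (p * (1 / β)))⁻¹ * ((1 + (2 * Y ^ 2)⁻¹) ^ (p * (1 / β)))⁻¹ := by
    conv_lhs => rw [hYeq]
    rw [Real.inv_rpow hprodpos.le,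
      Real.mul_rpow (by positivity) (by positivity),
      Real.mul_rpow hr.le (by positivity),
      ← Real.rpow_mul (by norm_num : (0:ℝ) ≤ 2),
      ← Real.rpow_mul hE.le]
    field_simp
  rw [main, hexp, Real.rpow_neg (by norm_num : (0:ℝ) ≤ 2), Real.rpow_neg hE.le]

theorem stmt6 (β : ℝ) (hβ : 0 < β) (y : ℝ → ℝ)
    (hy : ∀ r : ℝ, 0 < r → 0 < y r ∧ r * y r * (1 + 2 * (y r) ^ 2) ^ ((β - 1) / 2) = 1) :
    Filter.Tendsto
      (fun r => (r ^ (1 / β) * y r - (2 : ℝ) ^ ((1 - β) / (2 * β))) / r ^ (2 / β))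
      (nhdsWithin 0 (Set.Ioi 0))
      (nhds (-((β - 1) / β) * (2 : ℝ) ^ (-(3 * β + 1) / (2 * β)))) := by
  have hβ' : β ≠ 0 := hβ.ne'
  set c : ℝ := (1 - β) / (2 * β) with hcdef
  set A : ℝ := (2:ℝ) ^ c with hAdef
  have hApos : 0 < A := Real.rpow_pos_of_pos two_pos c
  set ε : ℝ → ℝ := fun r => (2 * (y r) ^ 2)⁻¹ with hεdef
  have hεpos : ∀ r ∈ Ioi (0:ℝ), 0 < ε r := by
    intro r hr
    have h0 := (hy r hr).1
    simp only [hεdef]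
    positivity
  -- y tends to infinity
  have hytop : Tendsto y (nhdsWithin 0 (Set.Ioi 0)) atTop := by
    rw [tendsto_atTop]
    intro M
    set M' : ℝ := max M 1 with hM'def
    have hM' : (0:ℝ) < M' := lt_of_lt_of_le one_pos (le_max_right _ _)
    set C : ℝ := max ((1 + 2 * M' ^ 2) ^ ((β - 1) / 2)) 1 with hCdef
    have hC : (0:ℝ) < C := lt_of_lt_of_le one_pos (le_max_right _ _)
    have hδ : (0:ℝ) < (M' * C)⁻¹ := by positivity
    filter_upwards [Ioo_mem_nhdsGT_of_mem (Set.left_mem_Ico.mpr hδ)] with r hr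
    obtain ⟨hy0, heq⟩ := hy r hr.1
    by_contra h
    push_neg at h
    have hyM : y r < M' := lt_of_lt_of_le h (le_max_left _ _)
    have hb : (1 + 2 * (y r) ^ 2 : ℝ) ^ ((β - 1) / 2) ≤ C := by
      rcases le_or_gt 0 ((β - 1) / 2) with hp | hp
      · calc (1 + 2 * (y r) ^ 2 : ℝ) ^ ((β - 1) / 2)
            ≤ (1 + 2 * M' ^ 2) ^ ((β - 1) / 2) :=
              Real.rpow_le_rpow (by positivity) (by nlinarith) hp
          _ ≤ C := le_max_left _ _
      · calc (1 + 2 * (y r) ^ 2 : ℝ) ^ ((β - 1) / 2) ≤ 1 :=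
            Real.rpow_le_one_of_one_le_of_nonpos (by nlinarith) hp.le
          _ ≤ C := le_max_right _ _
    have hlt : r * y r * (1 + 2 * (y r) ^ 2) ^ ((β - 1) / 2) < 1 := by
      have h1 : r * y r * (1 + 2 * (y r) ^ 2) ^ ((β - 1) / 2) ≤ r * M' * C := by
        apply mul_le_mul _ hb (Real.rpow_nonneg (by positivity) _)
          (mul_nonneg hr.1.le hM'.le)
        exact mul_le_mul_of_nonneg_left hyM.le hr.1.le
      have h2 : r * M' * C < (M' * C)⁻¹ * M' * C := by
        apply mul_lt_mul_of_pos_right (mul_lt_mul_of_pos_right hr.2 hM') hC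
      have h3 : (M' * C)⁻¹ * M' * C = 1 := by field_simp
      linarith
    linarith [heq]
  -- ε tends to 0
  have hεlim : Tendsto ε (nhdsWithin 0 (Set.Ioi 0)) (nhds 0) := by
    apply Tendsto.inv_tendsto_atTop
    have h1 : Tendsto (fun r => (y r) ^ 2) (nhdsWithin 0 (Set.Ioi 0)) atTop :=
      (tendsto_pow_atTop two_ne_zero).comp hytop
    exact h1.const_mul_atTop two_pos
  have hεne : Tendsto ε (nhdsWithin 0 (Set.Ioi 0)) (nhdsWithin 0 {x | x ≠ 0}) := by
    apply tendsto_nhdsWithin_of_tendsto_nhds_of_eventually_within _ hεlim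
    filter_upwards [self_mem_nhdsWithin] with r hr
    exact (hεpos r hr).ne'
  -- derivative of (1+x)^c at 0
  have hderiv : HasDerivAt (fun x : ℝ => (1 + x) ^ c) c 0 := by
    have h2 : HasDerivAt (fun x : ℝ => 1 + x) 1 0 := by
      simpa using (hasDerivAt_id (0:ℝ)).const_add 1
    have h := (Real.hasDerivAt_rpow_const (x := (1:ℝ)) (p := c) (Or.inl one_ne_zero))
    have h' : HasDerivAt (fun x : ℝ => x ^ c) (c * 1 ^ (c - 1)) ((fun x : ℝ => 1 + x) 0) := by
      simpa using h
    have := h'.comp 0 h2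
    simpa [Function.comp_def] using this
  have hslope : Tendsto (fun x : ℝ => ((1 + x) ^ c - 1) / x)
      (nhdsWithin 0 {x | x ≠ 0}) (nhds c) := by
    have h := hasDerivAt_iff_tendsto_slope.mp hderiv
    refine h.congr fun x => ?_
    simp [slope_def_field]
  have h1 : Tendsto (fun r => ((1 + ε r) ^ c - 1) / ε r)
      (nhdsWithin 0 (Set.Ioi 0)) (nhds c) := hslope.comp hεne
  -- key identity
  have hkey : ∀ r ∈ Ioi (0:ℝ), r ^ (1 / β) * y r = A * (1 + ε r) ^ c := by
    intro r hr
    exact aux_pow_eq β hβ hr (hy r hr).1 (hy r hr).2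
  -- u tends to A
  have hu : Tendsto (fun r => r ^ (1 / β) * y r) (nhdsWithin 0 (Set.Ioi 0)) (nhds A) := by
    have hE1 : Tendsto (fun r => 1 + ε r) (nhdsWithin 0 (Set.Ioi 0)) (nhds 1) := by
      simpa using tendsto_const_nhds.add hεlim
    have hE2 : Tendsto (fun r => (1 + ε r) ^ c) (nhdsWithin 0 (Set.Ioi 0)) (nhds 1) := by
      have := (Real.continuousAt_rpow_const 1 c (Or.inl one_ne_zero)).tendsto.comp hE1
      simpa [Function.comp_def] using this
    have : Tendsto (fun r => A * (1 + ε r) ^ c) (nhdsWithin 0 (Set.Ioi 0)) (nhds A) := by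
      simpa using tendsto_const_nhds.mul hE2
    refine this.congr' ?_
    filter_upwards [self_mem_nhdsWithin] with r hr
    exact (hkey r hr).symm
  have h2lim : Tendsto (fun r => A / (2 * (r ^ (1 / β) * y r) ^ 2))
      (nhdsWithin 0 (Set.Ioi 0)) (nhds (A / (2 * A ^ 2))) := by
    apply Tendsto.div tendsto_const_nhds (tendsto_const_nhds.mul (hu.pow 2))
    exact (mul_pos two_pos (pow_pos hApos 2)).ne'
  have hcomb := h1.mul h2lim
  -- value identity
  have hval : c * (A / (2 * A ^ 2)) = -((β - 1) / β) * (2:ℝ) ^ (-(3 * β + 1) / (2 * β)) := by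
    have e2 : -(3 * β + 1) / (2 * β) = -2 - c := by rw [hcdef]; field_simp; ring
    rw [e2, Real.rpow_sub two_pos, ← hAdef,
      show (-2:ℝ) = ((-2:ℤ):ℝ) by norm_num, Real.rpow_intCast]
    rw [hcdef]
    have hA0 : A ≠ 0 := hApos.ne'
    field_simp
    ring
  rw [hval] at hcomb
  refine hcomb.congr' ?_
  filter_upwards [self_mem_nhdsWithin] with r hr
  -- pointwise equality
  have hy0 := (hy r hr).1
  have hε0 := hεpos r hr
  have hrp : (0:ℝ) < r ^ (1 / β) := Real.rpow_pos_of_pos hr _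
  have hXpos : (0:ℝ) < (1 + ε r) ^ c := Real.rpow_pos_of_pos (by positivity) c
  have hr2β : r ^ (2 / β) = 2 * ε r * (r ^ (1 / β) * y r) ^ 2 := by
    have hsq : r ^ (2 / β) = (r ^ (1 / β)) ^ 2 := by
      rw [pow_two, ← Real.rpow_add hr]
      congr 1
      ring
    rw [hsq]
    simp only [hεdef]
    field_simp
  rw [hr2β, hkey r hr]
  field_simp [hε0.ne', hApos.ne', hXpos.ne']
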